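/- Let ρ be a faithful density matrix, not maximally mixed, with extreme eigenvalues λ_min, λ_max. For any Hermitian A, B: V_ρ(A)·V_ρ(B) ≥ ((λ_max + λ_min)²/(4(λ_max − λ_min)²))·|⟨[A,B]⟩_ρ|² + Cov_ρ(A,B)² (generalized Schrödinger relation). -/

import Mathlib

open Matrix ComplexOrder Finset

private lemma swap_sum {n : ℕ} (g : Fin n → Fin n → ℝ) :
    ∑ i, ∑ j, g i j = ∑ i, ∑ j, g j i := Finset.sum_comm

private lemma sym_sum {n : ℕ} (lam : Fin n → ℝ) (g : Fin n → Fin n → ℝ)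
    (hg : ∀ i j, g j i = g i j) :
    ∑ i, ∑ j, lam i * g i j = ∑ i, ∑ j, ((lam i + lam j)/2) * g i j := by
  have h1 : ∑ i, ∑ j, lam i * g i j = ∑ i, ∑ j, lam j * g i j := by
    rw [swap_sum (fun i j => lam i * g i j)]
    exact Finset.sum_congr rfl fun i _ => Finset.sum_congr rfl fun j _ => by rw [hg]
  calc ∑ i, ∑ j, lam i * g i j
      = ((∑ i, ∑ j, lam i * g i j) + ∑ i, ∑ j, lam j * g i j)/2 := by rw [← h1]; ring
    _ = (∑ i, ∑ j, (lam i * g i j + lam j * g i j))/2 := by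
        rw [← Finset.sum_add_distrib]
        simp_rw [← Finset.sum_add_distrib]
    _ = ∑ i, ∑ j, ((lam i + lam j)/2) * g i j := by
        simp_rw [Finset.sum_div]
        exact Finset.sum_congr rfl fun i _ => Finset.sum_congr rfl fun j _ => by ring

private lemma antisym_sum {n : ℕ} (lam : Fin n → ℝ) (g : Fin n → Fin n → ℝ)
    (hg : ∀ i j, g j i = - g i j) :
    ∑ i, ∑ j, lam i * g i j = ∑ i, ∑ j, ((lam i - lam j)/2) * g i j := by
  have h1 : ∑ i, ∑ j, lam i * g i j = ∑ i, ∑ j, -(lam j * g i j) := by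
    rw [swap_sum (fun i j => lam i * g i j)]
    exact Finset.sum_congr rfl fun i _ => Finset.sum_congr rfl fun j _ => by rw [hg]; ring
  calc ∑ i, ∑ j, lam i * g i j
      = ((∑ i, ∑ j, lam i * g i j) + ∑ i, ∑ j, -(lam j * g i j))/2 := by rw [← h1]; ring
    _ = (∑ i, ∑ j, (lam i * g i j + -(lam j * g i j)))/2 := by
        rw [← Finset.sum_add_distrib]
        simp_rw [← Finset.sum_add_distrib]
    _ = ∑ i, ∑ j, ((lam i - lam j)/2) * g i j := by
        simp_rw [Finset.sum_div]
        exact Finset.sum_congr rfl fun i _ => Finset.sum_congr rfl fun j _ => by ring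

private lemma re_mk (x y : ℝ) : ((x:ℂ) + (y:ℂ)*Complex.I).re = x := by simp

private lemma im_mk (x y : ℝ) : ((x:ℂ) + (y:ℂ)*Complex.I).im = y := by simp

private lemma core_ineq {n : ℕ} (lam : Fin n → ℝ) (p q : Fin n → Fin n → ℂ)
    (hp : ∀ i j, p j i = (starRingEnd ℂ) (p i j))
    (hq : ∀ i j, q j i = (starRingEnd ℂ) (q i j))
    (lmin lmax : ℝ) (h0 : 0 < lmin) (hne : lmin < lmax)
    (hlb : ∀ i, lmin ≤ lam i) (hub : ∀ i, lam i ≤ lmax) :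
    ((lmax + lmin) ^ 2 / (4 * (lmax - lmin) ^ 2)) *
      (2 * ∑ i, ∑ j, lam i * ((starRingEnd ℂ) (p i j) * q i j).im) ^ 2
    + (∑ i, ∑ j, lam i * ((starRingEnd ℂ) (p i j) * q i j).re) ^ 2
    ≤ (∑ i, ∑ j, lam i * Complex.normSq (p i j)) *
      (∑ i, ∑ j, lam i * Complex.normSq (q i j)) := by
  have hS : (0:ℝ) < lmax + lmin := by linarith
  have hD : (0:ℝ) < lmax - lmin := by linarith
  set r : ℝ := (lmax - lmin)/(lmax + lmin) with hrdef
  have hr : 0 < r := div_pos hD hS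
  have hpos : ∀ i, 0 < lam i := fun i => lt_of_lt_of_le h0 (hlb i)
  -- conjugation symmetry of w
  have hwc : ∀ i j, (starRingEnd ℂ) (p j i) * q j i
      = (starRingEnd ℂ) ((starRingEnd ℂ) (p i j) * q i j) := by
    intro i j; rw [hp, hq, _root_.map_mul]
  have hRe_sym : ∀ i j, ((starRingEnd ℂ) (p j i) * q j i).re
      = ((starRingEnd ℂ) (p i j) * q i j).re := by
    intro i j; rw [hwc i j, Complex.conj_re]
  have hIm_sym : ∀ i j, ((starRingEnd ℂ) (p j i) * q j i).im
      = -((starRingEnd ℂ) (p i j) * q i j).im := by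
    intro i j; rw [hwc i j, Complex.conj_im]
  -- key eigenvalue bound
  have hkey : ∀ i j, |(lam i - lam j)/(2*r)| ≤ (lam i + lam j)/2 := by
    intro i j
    have h2r : (0:ℝ) < 2*r := by linarith
    rw [abs_div, abs_of_pos h2r, div_le_iff₀ h2r]
    have heq : (lam i + lam j)/2 * (2*r) = ((lam i + lam j) * (lmax - lmin))/(lmax + lmin) := by
      rw [hrdef]; field_simp
    rw [heq, le_div_iff₀ hS]
    rcases abs_cases (lam i - lam j) with ⟨h,_⟩|⟨h,_⟩ <;> rw [h] <;>
      nlinarith [hlb i, hub i, hlb j, hub j]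
  -- the complex numbers ζ
  set ζ : Fin n → Fin n → ℂ := fun i j =>
    ((((lam i + lam j)/2) * ((starRingEnd ℂ) (p i j) * q i j).re : ℝ) : ℂ)
    + ((((lam i - lam j)/(2*r)) * ((starRingEnd ℂ) (p i j) * q i j).im : ℝ) : ℂ) * Complex.I
    with hzdef
  have hζre : ∀ i j, (ζ i j).re
      = ((lam i + lam j)/2) * ((starRingEnd ℂ) (p i j) * q i j).re := by
    intro i j; simp only [hzdef]; exact re_mk _ _
  have hζim : ∀ i j, (ζ i j).im
      = ((lam i - lam j)/(2*r)) * ((starRingEnd ℂ) (p i j) * q i j).im := by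
    intro i j; simp only [hzdef]; exact im_mk _ _
  set Z : ℂ := ∑ i, ∑ j, ζ i j with hZdef
  set K : ℝ := ∑ i, ∑ j, lam i * ((starRingEnd ℂ) (p i j) * q i j).im with hKdef
  set Cov : ℝ := ∑ i, ∑ j, lam i * ((starRingEnd ℂ) (p i j) * q i j).re with hCovdef
  have hZre : Z.re = Cov := by
    rw [hZdef, Complex.re_sum]
    rw [hCovdef, sym_sum lam _ hRe_sym]
    exact Finset.sum_congr rfl fun i _ => by
      rw [Complex.re_sum]
      exact Finset.sum_congr rfl fun j _ => hζre i j
  have hZim : Z.im = K / r := by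
    rw [hZdef, Complex.im_sum]
    rw [hKdef, antisym_sum lam _ hIm_sym, Finset.sum_div]
    refine Finset.sum_congr rfl fun i _ => ?_
    rw [Complex.im_sum, Finset.sum_div]
    refine Finset.sum_congr rfl fun j _ => ?_
    rw [hζim i j]
    field_simp
  -- pointwise bound
  have habs : ∀ i j, ‖ζ i j‖
      ≤ ((lam i + lam j)/2) * ‖(starRingEnd ℂ) (p i j) * q i j‖ := by
    intro i j
    have hsnn : (0:ℝ) ≤ (lam i + lam j)/2 := by
      have := hpos i; have := hpos j; linarith
    have ht2 : ((lam i - lam j)/(2*r))^2 ≤ ((lam i + lam j)/2)^2 := by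
      have := hkey i j
      calc ((lam i - lam j)/(2*r))^2 = |(lam i - lam j)/(2*r)|^2 := (sq_abs _).symm
        _ ≤ ((lam i + lam j)/2)^2 := pow_le_pow_left₀ (abs_nonneg _) this 2
    have h1 : ‖ζ i j‖ = Real.sqrt ((ζ i j).re^2 + (ζ i j).im^2) := by
      rw [Complex.norm_def, Complex.normSq_apply]; ring_nf
    rw [h1, hζre, hζim]
    have h2 : ((lam i + lam j)/2) * ‖(starRingEnd ℂ) (p i j) * q i j‖
        = Real.sqrt ((((lam i + lam j)/2) * ‖(starRingEnd ℂ) (p i j) * q i j‖)^2) := by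
      rw [Real.sqrt_sq (by positivity)]
    rw [h2]
    apply Real.sqrt_le_sqrt
    have habs2 : (‖(starRingEnd ℂ) (p i j) * q i j‖)^2
        = ((starRingEnd ℂ) (p i j) * q i j).re^2 + ((starRingEnd ℂ) (p i j) * q i j).im^2 := by
      rw [Complex.sq_norm, Complex.normSq_apply]; ring
    have h3 : ((lam i + lam j)/2 * ‖(starRingEnd ℂ) (p i j) * q i j‖)^2
        = ((lam i + lam j)/2)^2 * ((starRingEnd ℂ) (p i j) * q i j).re^2
          + ((lam i + lam j)/2)^2 * ((starRingEnd ℂ) (p i j) * q i j).im^2 := by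
      rw [mul_pow, habs2]; ring
    rw [h3]
    nlinarith [mul_le_mul_of_nonneg_right ht2 (sq_nonneg (((starRingEnd ℂ) (p i j) * q i j).im))]
  -- triangle inequality
  have htri : ‖Z‖ ≤ ∑ i, ∑ j,
      ((lam i + lam j)/2) * ‖(starRingEnd ℂ) (p i j) * q i j‖ := by
    calc ‖Z‖ ≤ ∑ i, ‖∑ j, ζ i j‖ := norm_sum_le _ _
      _ ≤ ∑ i, ∑ j, ‖ζ i j‖ :=
          Finset.sum_le_sum fun i _ => norm_sum_le _ _
      _ ≤ _ := Finset.sum_le_sum fun i _ => Finset.sum_le_sum fun j _ => habs i j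
  -- Cauchy-Schwarz
  have hCS : (∑ i, ∑ j, ((lam i + lam j)/2) * ‖(starRingEnd ℂ) (p i j) * q i j‖)^2
      ≤ (∑ i, ∑ j, ((lam i + lam j)/2) * Complex.normSq (p i j))
        * (∑ i, ∑ j, ((lam i + lam j)/2) * Complex.normSq (q i j)) := by
    have := Finset.sum_sq_le_sum_mul_sum_of_sq_eq_mul
      (Finset.univ ×ˢ (Finset.univ : Finset (Fin n)))
      (r := fun x => ((lam x.1 + lam x.2)/2) * ‖(starRingEnd ℂ) (p x.1 x.2) * q x.1 x.2‖)
      (f := fun x => ((lam x.1 + lam x.2)/2) * Complex.normSq (p x.1 x.2))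
      (g := fun x => ((lam x.1 + lam x.2)/2) * Complex.normSq (q x.1 x.2))
      (fun x _ => mul_nonneg (by have := hpos x.1; have := hpos x.2; linarith)
        (Complex.normSq_nonneg _))
      (fun x _ => mul_nonneg (by have := hpos x.1; have := hpos x.2; linarith)
        (Complex.normSq_nonneg _))
      (fun x _ => by
        rw [mul_pow, Complex.sq_norm, Complex.normSq_mul, Complex.normSq_conj]; ring)
    simpa [← Finset.univ_product_univ, Finset.sum_product, _root_.map_mul, Complex.norm_conj] using this
  -- symmetrizations of VA, VB
  have hVA : ∑ i, ∑ j, lam i * Complex.normSq (p i j)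
      = ∑ i, ∑ j, ((lam i + lam j)/2) * Complex.normSq (p i j) :=
    sym_sum lam _ (fun i j => by rw [hp i j, Complex.normSq_conj])
  have hVB : ∑ i, ∑ j, lam i * Complex.normSq (q i j)
      = ∑ i, ∑ j, ((lam i + lam j)/2) * Complex.normSq (q i j) :=
    sym_sum lam _ (fun i j => by rw [hq i j, Complex.normSq_conj])
  -- assemble
  have hc : ((lmax + lmin)^2/(4*(lmax - lmin)^2)) * (2*K)^2 = (K/r)^2 := by
    rw [hrdef]; field_simp; ring
  have hZsq : (‖Z‖)^2 = Cov^2 + (K/r)^2 := by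
    rw [Complex.sq_norm, Complex.normSq_apply, hZre, hZim]; ring
  calc ((lmax + lmin)^2/(4*(lmax - lmin)^2)) * (2*K)^2 + Cov^2
      = Cov^2 + (K/r)^2 := by rw [hc]; ring
    _ = (‖Z‖)^2 := hZsq.symm
    _ ≤ (∑ i, ∑ j, ((lam i + lam j)/2) * ‖(starRingEnd ℂ) (p i j) * q i j‖)^2 :=
        pow_le_pow_left₀ (norm_nonneg _) htri 2
    _ ≤ _ := hCS
    _ = (∑ i, ∑ j, lam i * Complex.normSq (p i j))
        * (∑ i, ∑ j, lam i * Complex.normSq (q i j)) := by rw [hVA, hVB]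

private lemma trace_centered {n : ℕ} (ρ X Y : Matrix (Fin n) (Fin n) ℂ) (x y : ℂ)
    (hρtr : ρ.trace = 1) (hX : (ρ*X).trace = x) (hY : (ρ*Y).trace = y) :
    (ρ * ((X - x•1) * (Y - y•1))).trace = (ρ*(X*Y)).trace - x*y := by
  have h : ρ * ((X - x•1) * (Y - y•1))
      = ρ*(X*Y) - y•(ρ*X) - x•(ρ*Y) + (x*y)•ρ := by
    simp only [Matrix.mul_sub, Matrix.sub_mul, Matrix.mul_smul, Matrix.smul_mul,
      Matrix.mul_one, Matrix.one_mul, smul_smul]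
    module
  rw [h, Matrix.trace_add, Matrix.trace_sub, Matrix.trace_sub, Matrix.trace_smul,
    Matrix.trace_smul, Matrix.trace_smul, hX, hY, hρtr, smul_eq_mul, smul_eq_mul, smul_eq_mul]
  ring

private lemma centered_comm {n : ℕ} (X Y : Matrix (Fin n) (Fin n) ℂ) (x y : ℂ) :
    (X - x•1)*(Y - y•1) - (Y - y•1)*(X - x•1) = X*Y - Y*X := by
  simp only [Matrix.mul_sub, Matrix.sub_mul, Matrix.mul_smul, Matrix.smul_mul,
    Matrix.mul_one, Matrix.one_mul, smul_smul]
  module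

/-- Generalized Schrödinger uncertainty relation for faithful,
non-maximally-mixed states. -/
theorem gen_schroedinger {n : ℕ} (ρ A B : Matrix (Fin n) (Fin n) ℂ)
    (hρ : ρ.PosDef) (hρtr : ρ.trace = 1)
    (hA : A.IsHermitian) (hB : B.IsHermitian)
    (lmin lmax : ℝ)
    (hmin : IsLeast (Set.range hρ.1.eigenvalues) lmin)
    (hmax : IsGreatest (Set.range hρ.1.eigenvalues) lmax)
    (hne : lmin < lmax) :
    ((ρ * A * A).trace.re - ((ρ * A).trace.re) ^ 2) *
      ((ρ * B * B).trace.re - ((ρ * B).trace.re) ^ 2) ≥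
    ((lmax + lmin) ^ 2 / (4 * (lmax - lmin) ^ 2)) *
      ‖(ρ * (A * B - B * A)).trace‖ ^ 2 +
    ((1 / 2) * (ρ * (A * B + B * A)).trace.re -
        (ρ * A).trace.re * (ρ * B).trace.re) ^ 2 := by
  set lam : Fin n → ℝ := hρ.1.eigenvalues with hlam
  have hpos : ∀ i, 0 < lam i := hρ.eigenvalues_pos
  have hlb : ∀ i, lmin ≤ lam i := fun i => hmin.2 ⟨i, rfl⟩
  have hub : ∀ i, lam i ≤ lmax := fun i => hmax.2 ⟨i, rfl⟩
  have h0 : 0 < lmin := by obtain ⟨i, hi⟩ := hmin.1; exact hi ▸ hpos i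
  -- reality of expectation values of hermitian observables
  have hreal : ∀ (M : Matrix (Fin n) (Fin n) ℂ), M.IsHermitian →
      (ρ * M).trace = (((ρ * M).trace.re : ℝ) : ℂ) := by
    intro M hM
    refine (Complex.conj_eq_iff_re.mp ?_).symm
    calc (starRingEnd ℂ) ((ρ * M).trace) = ((ρ * M)ᴴ).trace := (Matrix.trace_conjTranspose _).symm
      _ = (Mᴴ * ρᴴ).trace := by rw [Matrix.conjTranspose_mul]
      _ = (M * ρ).trace := by rw [hM, hρ.1]
      _ = (ρ * M).trace := trace_mul_comm _ _
  set a : ℝ := (ρ * A).trace.re with hadef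
  set b : ℝ := (ρ * B).trace.re with hbdef
  have htrA : (ρ * A).trace = ((a : ℝ) : ℂ) := hreal A hA
  have htrB : (ρ * B).trace = ((b : ℝ) : ℂ) := hreal B hB
  set Ac : Matrix (Fin n) (Fin n) ℂ := A - (a:ℂ) • 1 with hAcdef
  set Bc : Matrix (Fin n) (Fin n) ℂ := B - (b:ℂ) • 1 with hBcdef
  have hone : ((1 : Matrix (Fin n) (Fin n) ℂ)).IsHermitian := Matrix.isHermitian_one
  have hAch : Ac.IsHermitian := hA.sub (by
    unfold Matrix.IsHermitian
    rw [Matrix.conjTranspose_smul]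
    simp [Complex.conj_ofReal])
  have hBch : Bc.IsHermitian := hB.sub (by
    unfold Matrix.IsHermitian
    rw [Matrix.conjTranspose_smul]
    simp [Complex.conj_ofReal])
  -- spectral decomposition
  set U : Matrix (Fin n) (Fin n) ℂ := (hρ.1.eigenvectorUnitary : Matrix (Fin n) (Fin n) ℂ)
    with hUdef
  set D : Matrix (Fin n) (Fin n) ℂ := Matrix.diagonal (RCLike.ofReal ∘ lam) with hDdef
  have hsp : ρ = U * D * star U := hρ.1.spectral_theorem
  have hU2 : U * star U = 1 := Unitary.coe_mul_star_self _
  have htr : ∀ M : Matrix (Fin n) (Fin n) ℂ,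
      (ρ * M).trace = (D * (star U * M * U)).trace := by
    intro M
    calc (ρ*M).trace = (U * (D * (star U * M))).trace := by
          rw [hsp, Matrix.mul_assoc, Matrix.mul_assoc]
      _ = ((D * (star U * M)) * U).trace := trace_mul_comm _ _
      _ = (D * (star U * M * U)).trace := by rw [Matrix.mul_assoc]
  have hconj : ∀ X Y : Matrix (Fin n) (Fin n) ℂ,
      star U * (X*Y) * U = (star U * X * U) * (star U * Y * U) := by
    intro X Y
    have : (star U * X * U) * (star U * Y * U) = star U * (X*Y) * U := by
      simp only [Matrix.mul_assoc]
      rw [← Matrix.mul_assoc U (star U) _, hU2, Matrix.one_mul]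
    exact this.symm
  set P : Matrix (Fin n) (Fin n) ℂ := star U * Ac * U with hPdef
  set Q : Matrix (Fin n) (Fin n) ℂ := star U * Bc * U with hQdef
  have hPh : P.IsHermitian := by
    rw [hPdef, Matrix.star_eq_conjTranspose]
    exact Matrix.isHermitian_conjTranspose_mul_mul U hAch
  have hQh : Q.IsHermitian := by
    rw [hQdef, Matrix.star_eq_conjTranspose]
    exact Matrix.isHermitian_conjTranspose_mul_mul U hBch
  have hPsym : ∀ i j, P j i = (starRingEnd ℂ) (P i j) := by
    intro i j
    conv_lhs => rw [← hPh]
    rfl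
  have hQsym : ∀ i j, Q j i = (starRingEnd ℂ) (Q i j) := by
    intro i j
    conv_lhs => rw [← hQh]
    rfl
  -- trace of D times a product as a double sum
  have hDsum : ∀ X Y : Matrix (Fin n) (Fin n) ℂ,
      (D * (X*Y)).trace = ∑ i, ∑ j, ((lam i : ℝ) : ℂ) * (X i j * Y j i) := by
    intro X Y
    rw [hDdef]
    simp [Matrix.trace, Matrix.diag, Matrix.mul_apply, Matrix.diagonal, Finset.mul_sum]
  -- variance identities
  have EA : (ρ * A * A).trace.re - a^2 = ∑ i, ∑ j, lam i * Complex.normSq (P i j) := by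
    have h1 : (ρ * (Ac * Ac)).trace = (ρ*(A*A)).trace - (a:ℂ)*(a:ℂ) :=
      trace_centered ρ A A _ _ hρtr htrA htrA
    have h2 : (ρ * (Ac*Ac)).trace = (D * (P*P)).trace := by rw [htr, hconj]
    have h3 : (D*(P*P)).trace
        = ((∑ i, ∑ j, lam i * Complex.normSq (P i j) : ℝ) : ℂ) := by
      rw [hDsum P P]
      rw [Complex.ofReal_sum]
      refine Finset.sum_congr rfl fun i _ => ?_
      rw [Complex.ofReal_sum]
      refine Finset.sum_congr rfl fun j _ => ?_
      rw [hPsym i j, Complex.mul_conj]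
      push_cast
      ring
    have h := h1.symm.trans (h2.trans h3)
    have h6 : (ρ*(A*A)).trace.re - a*a = ∑ i, ∑ j, lam i * Complex.normSq (P i j) := by
      simpa using congrArg Complex.re h
    rw [Matrix.mul_assoc, sq]
    linarith [h6]
  have EB : (ρ * B * B).trace.re - b^2 = ∑ i, ∑ j, lam i * Complex.normSq (Q i j) := by
    have h1 : (ρ * (Bc * Bc)).trace = (ρ*(B*B)).trace - (b:ℂ)*(b:ℂ) :=
      trace_centered ρ B B _ _ hρtr htrB htrB
    have h2 : (ρ * (Bc*Bc)).trace = (D * (Q*Q)).trace := by rw [htr, hconj]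
    have h3 : (D*(Q*Q)).trace
        = ((∑ i, ∑ j, lam i * Complex.normSq (Q i j) : ℝ) : ℂ) := by
      rw [hDsum Q Q]
      rw [Complex.ofReal_sum]
      refine Finset.sum_congr rfl fun i _ => ?_
      rw [Complex.ofReal_sum]
      refine Finset.sum_congr rfl fun j _ => ?_
      rw [hQsym i j, Complex.mul_conj]
      push_cast
      ring
    have h := h1.symm.trans (h2.trans h3)
    have h6 : (ρ*(B*B)).trace.re - b*b = ∑ i, ∑ j, lam i * Complex.normSq (Q i j) := by
      simpa using congrArg Complex.re h
    rw [Matrix.mul_assoc, sq]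
    linarith [h6]
  -- covariance identity
  have ECov : (1/2) * (ρ * (A*B + B*A)).trace.re - a*b
      = ∑ i, ∑ j, lam i * ((starRingEnd ℂ) (P i j) * Q i j).re := by
    have h1 : (ρ * (Ac * Bc)).trace = (ρ*(A*B)).trace - (a:ℂ)*(b:ℂ) :=
      trace_centered ρ A B _ _ hρtr htrA htrB
    have h1' : (ρ * (Bc * Ac)).trace = (ρ*(B*A)).trace - (b:ℂ)*(a:ℂ) :=
      trace_centered ρ B A _ _ hρtr htrB htrA
    have h2 : (ρ * (Ac*Bc)).trace = (D * (P*Q)).trace := by rw [htr, hconj]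
    have h2' : (ρ * (Bc*Ac)).trace = (D * (Q*P)).trace := by rw [htr, hconj]
    have h3 : (D*(P*Q)).trace + (D*(Q*P)).trace
        = ((∑ i, ∑ j, 2 * (lam i * ((starRingEnd ℂ) (P i j) * Q i j).re) : ℝ) : ℂ) := by
      rw [hDsum P Q, hDsum Q P, ← Finset.sum_add_distrib, Complex.ofReal_sum]
      refine Finset.sum_congr rfl fun i _ => ?_
      rw [← Finset.sum_add_distrib, Complex.ofReal_sum]
      refine Finset.sum_congr rfl fun j _ => ?_
      rw [hPsym i j, hQsym i j]
      have hw : P i j * (starRingEnd ℂ) (Q i j)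
          = (starRingEnd ℂ) ((starRingEnd ℂ) (P i j) * Q i j) := by
        rw [_root_.map_mul, Complex.conj_conj]
      rw [hw, mul_comm (Q i j) ((starRingEnd ℂ) (P i j))]
      have hac := Complex.add_conj ((starRingEnd ℂ) (P i j) * Q i j)
      push_cast
      push_cast at hac
      linear_combination (lam i : ℂ) * hac
    have h5 : (ρ * (A*B + B*A)).trace = (ρ*(A*B)).trace + (ρ*(B*A)).trace := by
      rw [Matrix.mul_add, Matrix.trace_add]
    have hh : (ρ * (A*B + B*A)).trace - (a:ℂ)*(b:ℂ) - (b:ℂ)*(a:ℂ)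
        = ((∑ i, ∑ j, 2 * (lam i * ((starRingEnd ℂ) (P i j) * Q i j).re) : ℝ) : ℂ) := by
      rw [h5]
      linear_combination (h1.symm.trans h2) + (h1'.symm.trans h2') + h3
    have h6 : (ρ * (A*B + B*A)).trace.re - a*b - b*a
        = ∑ i, ∑ j, 2 * (lam i * ((starRingEnd ℂ) (P i j) * Q i j).re) := by
      simpa using congrArg Complex.re hh
    have h7 : ∑ i, ∑ j, (2:ℝ) * (lam i * ((starRingEnd ℂ) (P i j) * Q i j).re)
        = 2 * ∑ i, ∑ j, lam i * ((starRingEnd ℂ) (P i j) * Q i j).re := by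
      simp [Finset.mul_sum]
    rw [h7] at h6
    linarith [h6]
  -- commutator identity
  have EComm : ‖(ρ * (A * B - B * A)).trace‖ ^ 2
      = (2 * ∑ i, ∑ j, lam i * ((starRingEnd ℂ) (P i j) * Q i j).im)^2 := by
    have hcc : A*B - B*A = Ac*Bc - Bc*Ac := (centered_comm A B (a:ℂ) (b:ℂ)).symm
    have h1 : (ρ * (A*B - B*A)).trace = (D * (P*Q)).trace - (D * (Q*P)).trace := by
      rw [hcc, Matrix.mul_sub, Matrix.trace_sub, htr (Ac*Bc), htr (Bc*Ac), hconj, hconj]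
    have h2a : (D * (P*Q)).trace - (D * (Q*P)).trace
        = ∑ i, ∑ j, Complex.I *
            ((-(2 * (lam i * ((starRingEnd ℂ) (P i j) * Q i j).im)) : ℝ) : ℂ) := by
      rw [hDsum P Q, hDsum Q P, ← Finset.sum_sub_distrib]
      refine Finset.sum_congr rfl fun i _ => ?_
      rw [← Finset.sum_sub_distrib]
      refine Finset.sum_congr rfl fun j _ => ?_
      rw [hPsym i j, hQsym i j]
      have hw : P i j * (starRingEnd ℂ) (Q i j)
          = (starRingEnd ℂ) ((starRingEnd ℂ) (P i j) * Q i j) := by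
        rw [_root_.map_mul, Complex.conj_conj]
      rw [hw, mul_comm (Q i j) ((starRingEnd ℂ) (P i j))]
      have hsc := Complex.sub_conj ((starRingEnd ℂ) (P i j) * Q i j)
      push_cast
      push_cast at hsc
      linear_combination (-(lam i) : ℂ) * hsc
    have h2b : ∑ i, ∑ j, Complex.I *
          ((-(2 * (lam i * ((starRingEnd ℂ) (P i j) * Q i j).im)) : ℝ) : ℂ)
        = Complex.I * ((∑ i, ∑ j,
            -(2 * (lam i * ((starRingEnd ℂ) (P i j) * Q i j).im)) : ℝ) : ℂ) := by
      rw [Complex.ofReal_sum, Finset.mul_sum]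
      refine Finset.sum_congr rfl fun i _ => ?_
      rw [Complex.ofReal_sum, Finset.mul_sum]
    rw [h1, h2a, h2b, norm_mul, Complex.norm_I, Complex.norm_real, Real.norm_eq_abs, one_mul]
    rw [sq_abs]
    have h7 : ∑ i, ∑ j, -((2:ℝ) * (lam i * ((starRingEnd ℂ) (P i j) * Q i j).im))
        = -(2 * ∑ i, ∑ j, lam i * ((starRingEnd ℂ) (P i j) * Q i j).im) := by
      simp [Finset.mul_sum]
    rw [h7]
    ring
  rw [ge_iff_le, EA, EB, ECov, EComm]
  exact core_ineq lam (fun i j => P i j) (fun i j => Q i j) hPsym hQsym lmin lmax h0 hne hlb hub
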